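/- Let $X$ be a Banach space and $f : [a,b] \to X$ differentiable with Bochner-integrable derivative. Then $\left\| \int_a^b f(t)\,dt - (b-a)\cdot\frac{f(a)+f(b)}{2} \right\| \le \frac{1}{2}(b-a)\int_a^b \|f'(t)\|\,dt$. -/

import Mathlib

open MeasureTheory intervalIntegral

theorem stmt9 {X : Type*} [NormedAddCommGroup X] [NormedSpace ℝ X] [CompleteSpace X]
    {a b : ℝ} (hab : a < b) {f f' : ℝ → X}
    (hderiv : ∀ t ∈ Set.Icc a b, HasDerivAt f (f' t) t)
    (hint : IntervalIntegrable f' volume a b) :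
    ‖(∫ t in a..b, f t) - ((b - a) / 2) • (f a + f b)‖ ≤
      (1 / 2) * (b - a) * (∫ t in a..b, ‖f' t‖) := by
  set u : ℝ → ℝ := fun t => t - (a + b) / 2 with hu_def
  have huIcc : Set.uIcc a b = Set.Icc a b := Set.uIcc_of_le hab.le
  have hu : ∀ x ∈ Set.uIcc a b, HasDerivAt u ((fun _ => (1:ℝ)) x) x := fun x _ =>
    (hasDerivAt_id x).sub_const _
  have hv : ∀ x ∈ Set.uIcc a b, HasDerivAt f (f' x) x := by
    rw [huIcc]; exact hderiv
  have hfcont : ContinuousOn f (Set.uIcc a b) := fun x hx => (hv x hx).continuousAt.continuousWithinAt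
  have hfint : IntervalIntegrable f volume a b := hfcont.intervalIntegrable
  have hsmul_int : IntervalIntegrable (fun t => u t • f' t) volume a b := by
    rw [intervalIntegrable_iff_integrableOn_Icc_of_le hab.le] at hint ⊢
    exact hint.continuousOn_smul ((continuous_id.sub continuous_const).continuousOn)
      isCompact_Icc
  have heq : (∫ t in a..b, f t) - ((b - a) / 2) • (f a + f b)
      = -(∫ t in a..b, u t • f' t) := by
    have hd : ∀ x ∈ Set.uIcc a b, HasDerivAt (fun t => u t • f t) (f x + u x • f' x) x := by
      intro x hx
      have := (hu x hx).smul (hv x hx)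
      exact (by simpa [one_smul, add_comm] using this : HasDerivAt (u • f) (f x + u x • f' x) x)
    have key : (∫ t in a..b, (f t + u t • f' t)) = u b • f b - u a • f a :=
      integral_eq_sub_of_hasDerivAt (fun x hx => hd x hx) (hfint.add hsmul_int)
    rw [integral_add hfint hsmul_int] at key
    have : (∫ t in a..b, u t • f' t)
        = u b • f b - u a • f a - ∫ t in a..b, f t := by
      rw [eq_sub_iff_add_eq, add_comm]; exact key
    rw [eq_sub_iff_add_eq] at this
    have hub : u b = (b - a) / 2 := by simp [hu_def]; ring
    have hua : u a = -((b - a) / 2) := by simp [hu_def]; ring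
    rw [hub, hua] at this
    rw [neg_smul, sub_neg_eq_add] at this
    have h2 := eq_sub_of_add_eq' this
    rw [h2, smul_add]
    abel
  rw [heq, norm_neg]
  calc ‖∫ t in a..b, u t • f' t‖ ≤ ∫ t in a..b, ‖u t • f' t‖ :=
        norm_integral_le_integral_norm hab.le
    _ ≤ ∫ t in a..b, ((b - a) / 2) * ‖f' t‖ := by
        apply integral_mono_on hab.le hsmul_int.norm (hint.norm.const_mul _)
        intro t ht
        rw [norm_smul, Real.norm_eq_abs]
        apply mul_le_mul_of_nonneg_right _ (norm_nonneg _)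
        rw [abs_le]
        constructor <;> [simp [hu_def]; simp [hu_def]] <;> linarith [ht.1, ht.2]
    _ = (1 / 2) * (b - a) * (∫ t in a..b, ‖f' t‖) := by
        rw [intervalIntegral.integral_const_mul]; ring
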